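/- For every positive integer n, the finite sequence c_{n,k} = ((n-2k)·2^(n-2k-1)/n)·C(n,k), for 0 ≤ k ≤ ⌊(n-1)/2⌋, is log-concave: c_{n,k}² ≥ c_{n,k-1}·c_{n,k+1} for all 1 ≤ k ≤ ⌊(n-1)/2⌋ - 1, and every c_{n,k} is strictly positive. -/

import Mathlib

/-- `c n k = ((n-2k)·2^(n-2k-1)/n)·C(n,k)`, the coefficient of `t^k` in the inverse
Kazhdan–Lusztig polynomial of the fan matroid. -/
noncomputable def fanIKLc (n k : ℕ) : ℚ :=
  ((n : ℚ) - 2 * k) * 2 ^ (n - 2 * k - 1) / n * n.choose k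

lemma choose_lc (n k : ℕ) (hk : 1 ≤ k) (hkn : k ≤ n) :
    n.choose (k-1) * n.choose (k+1) ≤ n.choose k ^ 2 := by
  have h1 := Nat.choose_succ_right_eq n (k-1)
  rw [show k - 1 + 1 = k by omega, show n - (k-1) = n - k + 1 by omega] at h1
  have h2 := Nat.choose_succ_right_eq n k
  have key : (n.choose (k-1) * n.choose (k+1)) * ((n - k + 1) * (k+1))
      ≤ (n.choose k ^ 2) * ((n - k + 1) * (k+1)) := by
    calc (n.choose (k-1) * n.choose (k+1)) * ((n - k + 1) * (k+1))
        = (n.choose (k-1) * (n - k + 1)) * (n.choose (k+1) * (k+1)) := by ring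
      _ = (n.choose k * k) * (n.choose k * (n - k)) := by rw [← h1, h2]
      _ = (n.choose k ^ 2) * (k * (n - k)) := by ring
      _ ≤ (n.choose k ^ 2) * ((n - k + 1) * (k+1)) := by
          apply Nat.mul_le_mul_left
          calc k * (n - k) ≤ (k + 1) * (n - k + 1) :=
                Nat.mul_le_mul (Nat.le_succ k) (Nat.le_succ _)
            _ = (n - k + 1) * (k + 1) := by ring
  exact Nat.le_of_mul_le_mul_right key (by positivity)

theorem stmt1 (n : ℕ) (hn : 1 ≤ n) :
    (∀ k, k ≤ (n - 1) / 2 → 0 < fanIKLc n k) ∧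
    (∀ k, 1 ≤ k → k + 1 ≤ (n - 1) / 2 →
      fanIKLc n (k - 1) * fanIKLc n (k + 1) ≤ fanIKLc n k ^ 2) := by
  constructor
  · intro k hk
    have h2k : 2 * k < n := by omega
    have h1 : (2 * k : ℚ) < n := by exact_mod_cast h2k
    have hnQ : (0:ℚ) < n := by exact_mod_cast hn
    have hc : (0:ℚ) < n.choose k := by
      exact_mod_cast Nat.choose_pos (by omega : k ≤ n)
    unfold fanIKLc
    apply mul_pos (div_pos (mul_pos (by linarith) (by positivity)) hnQ) hc
  · intro k hk hk1
    have hm : 2 * k + 3 ≤ n := by omega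
    set m := n - 2 * k with hmdef
    have hm3 : 3 ≤ m := by omega
    have e1 : n - 2 * (k - 1) - 1 = (m - 3) + 4 := by omega
    have e2 : n - 2 * k - 1 = (m - 3) + 2 := by omega
    have e3 : n - 2 * (k + 1) - 1 = m - 3 := by omega
    have hb := choose_lc n k hk (by omega)
    have hbQ : (n.choose (k-1) : ℚ) * n.choose (k+1) ≤ (n.choose k : ℚ) ^ 2 := by
      exact_mod_cast hb
    have hnQ : (0:ℚ) < n := by exact_mod_cast hn
    have hb1 : (0:ℚ) ≤ n.choose (k-1) := by positivity
    have hb3 : (0:ℚ) ≤ n.choose (k+1) := by positivity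
    set P : ℚ := 2 ^ (m - 3) with hP
    have hPpos : (0:ℚ) < P := by positivity
    unfold fanIKLc
    rw [e1, e2, e3, pow_add, pow_add]
    push_cast [Nat.cast_sub hk]
    field_simp
    have h1 : (0:ℚ) ≤ 16 * P^2 * ((n:ℚ) - 2*k)^2 * (n:ℚ)^2 := by positivity
    have h2 := mul_le_mul_of_nonneg_left hbQ h1
    have h3 : (0:ℚ) ≤ 64 * P^2 * (n:ℚ)^2 *
        ((n.choose (k-1):ℚ) * (n.choose (k+1):ℚ)) := by positivity
    nlinarith [h2, h3, mul_le_mul_of_nonneg_left hbQ (sq_nonneg ((n:ℚ) - 2*k)), mul_nonneg hb1 hb3]
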